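/- Let Γ be a simple graph on a finite vertex type V. Call a nonempty subset G ⊆ V a tube if the induced subgraph Γ|_G is connected, and for a tube G let N[G] := G ∪ {v ∈ V | ∃ w ∈ G, Γ.Adj v w} denote its closed neighborhood. Then for all tubes G ⊆ H of Γ, the integer sum over all tubes K with G ⊆ K ⊆ H and K ⊆ N[G] of (−1)^{|K| − |G|} equals 1 if G = H and equals 0 if G ≠ H. (Equivalently, the function μ_Γ(G,H) = (−1)^{|H|−|G|} for G ⊆ H ⊆ N[G] and 0 otherwise is the Möbius function of the poset of tubes of Γ ordered by inclusion.) -/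

import Mathlib

/-- A tube of a simple graph `Γ`: a nonempty set of vertices inducing a connected
subgraph. -/
def IsTube {V : Type*} (Γ : SimpleGraph V) (G : Finset V) : Prop :=
  G.Nonempty ∧ (Γ.induce (G : Set V)).Connected

/-- The closed neighborhood `N[G] = G ∪ {v | ∃ w ∈ G, Γ.Adj v w}` of a set of vertices. -/
def closedNbhd {V : Type*} [Fintype V] [DecidableEq V]
    (Γ : SimpleGraph V) [DecidableRel Γ.Adj] (G : Finset V) : Finset V :=
  G ∪ Finset.univ.filter (fun a => ∃ w ∈ G, Γ.Adj a w)

open scoped Classical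

section TubeAux
variable {V : Type*} [Fintype V] [DecidableEq V] (Γ : SimpleGraph V) [DecidableRel Γ.Adj]

lemma mem_closedNbhd {G : Finset V} {v : V} :
    v ∈ closedNbhd Γ G ↔ v ∈ G ∨ ∃ w ∈ G, Γ.Adj v w := by
  simp [closedNbhd]

lemma tube_of_between {G K : Finset V} (hG : IsTube Γ G) (h1 : G ⊆ K)
    (h2 : K ⊆ closedNbhd Γ G) : IsTube Γ K := by
  obtain ⟨⟨g0, hg0⟩, hconn⟩ := hG
  refine ⟨⟨g0, h1 hg0⟩, ?_⟩
  have hGK : (G : Set V) ⊆ (K : Set V) := by exact_mod_cast h1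
  -- every vertex of K reaches a vertex of G within induce K
  have key : ∀ v : (K : Set V), ∃ g : (K : Set V), (g : V) ∈ G ∧
      (Γ.induce (K : Set V)).Reachable v g := by
    rintro ⟨v, hv⟩
    rcases (mem_closedNbhd Γ).mp (h2 hv) with hvG | ⟨w, hwG, hadj⟩
    · exact ⟨⟨v, hv⟩, hvG, SimpleGraph.Reachable.refl _⟩
    · refine ⟨⟨w, h1 hwG⟩, hwG, SimpleGraph.Adj.reachable ?_⟩
      exact hadj
  have reachG : ∀ (x y : (K : Set V)), (x : V) ∈ G → (y : V) ∈ G →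
      (Γ.induce (K : Set V)).Reachable x y := by
    rintro ⟨x, hx⟩ ⟨y, hy⟩ hxG hyG
    have := hconn ⟨x, hxG⟩ ⟨y, hyG⟩
    have := this.map (Γ.induceHomOfLE hGK).toHom
    exact this
  have hne : Nonempty (K : Set V) := ⟨⟨g0, h1 hg0⟩⟩
  refine ⟨fun x y => ?_⟩
  obtain ⟨gx, hgx, hx⟩ := key x
  obtain ⟨gy, hgy, hy⟩ := key y
  exact hx.trans ((reachG gx gy hgx hgy).trans hy.symm)

lemma crossing {G H : Finset V} (hH : IsTube Γ H) (hGH : G ⊆ H) (hGne : G.Nonempty)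
    (hne : G ≠ H) : ∃ v ∈ H, v ∉ G ∧ v ∈ closedNbhd Γ G := by
  obtain ⟨a, haG⟩ := hGne
  obtain ⟨b, hbH, hbG⟩ : ∃ b ∈ H, b ∉ G := by
    by_contra h
    push_neg at h
    exact hne (Finset.Subset.antisymm hGH h)
  obtain ⟨p⟩ := hH.2 ⟨a, by exact_mod_cast hGH haG⟩ ⟨b, by exact_mod_cast hbH⟩
  obtain ⟨d, hd, hdS⟩ := p.exists_boundary_dart {x : (H : Set V) | (x : V) ∈ G}
    (by simpa using haG) (by simpa using hbG)
  refine ⟨d.snd, by simpa using d.snd.2, hdS.2, ?_⟩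
  rw [mem_closedNbhd]
  exact Or.inr ⟨d.fst, hdS.1, (d.adj.symm : Γ.Adj _ _)⟩

end TubeAux

/-- For tubes `G ⊆ H` of a finite simple graph `Γ`, the sum of `(−1)^{|K|−|G|}` over all
tubes `K` with `G ⊆ K ⊆ H` and `K ⊆ N[G]` equals `1` when `G = H` and `0` otherwise;
i.e. `μ_Γ(G,H) = (−1)^{|H|−|G|}` for `G ⊆ H ⊆ N[G]` (and `0` otherwise) is the Möbius
function of the poset of tubes of `Γ` ordered by inclusion. -/
theorem tube_moebius_sum
    {V : Type*} [Fintype V] [DecidableEq V] (Γ : SimpleGraph V) [DecidableRel Γ.Adj]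
    (G H : Finset V) (hG : IsTube Γ G) (hH : IsTube Γ H) (hGH : G ⊆ H) :
    (∑ K ∈ Finset.univ.filter
        (fun K : Finset V => IsTube Γ K ∧ G ⊆ K ∧ K ⊆ H ∧ K ⊆ closedNbhd Γ G),
        (-1 : ℤ) ^ (K.card - G.card)) =
      if G = H then 1 else 0 := by
  set T : Finset V := (H ∩ closedNbhd Γ G) \ G with hT
  have hsum : (∑ K ∈ Finset.univ.filter
        (fun K : Finset V => IsTube Γ K ∧ G ⊆ K ∧ K ⊆ H ∧ K ⊆ closedNbhd Γ G),
        (-1 : ℤ) ^ (K.card - G.card)) = ∑ S ∈ T.powerset, (-1 : ℤ) ^ S.card := by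
    refine Finset.sum_nbij' (fun K => K \ G) (fun S => S ∪ G) ?_ ?_ ?_ ?_ ?_
    · intro K hK
      simp only [Finset.mem_filter] at hK
      obtain ⟨_, _, h1, h2, h3⟩ := hK
      rw [Finset.mem_powerset]
      intro x hx
      rw [Finset.mem_sdiff] at hx ⊢
      exact ⟨Finset.mem_inter.mpr ⟨h2 hx.1, h3 hx.1⟩, hx.2⟩
    · intro S hS
      rw [Finset.mem_powerset] at hS
      have hSN : S ⊆ closedNbhd Γ G := fun x hx =>
        (Finset.mem_inter.mp (Finset.mem_sdiff.mp (hS hx)).1).2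
      have hSH : S ⊆ H := fun x hx =>
        (Finset.mem_inter.mp (Finset.mem_sdiff.mp (hS hx)).1).1
      have hGsub : G ⊆ S ∪ G := Finset.subset_union_right
      have hN : S ∪ G ⊆ closedNbhd Γ G := by
        refine Finset.union_subset hSN (fun x hx => ?_)
        rw [mem_closedNbhd]; exact Or.inl hx
      simp only [Finset.mem_filter]
      exact ⟨Finset.mem_univ _, tube_of_between Γ hG hGsub hN, hGsub,
        Finset.union_subset hSH hGH, hN⟩
    · intro K hK
      simp only [Finset.mem_filter] at hK
      exact Finset.sdiff_union_of_subset hK.2.2.1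
    · intro S hS
      rw [Finset.mem_powerset] at hS
      show (S ∪ G) \ G = S
      rw [Finset.union_sdiff_cancel_right]
      exact Finset.disjoint_left.mpr (fun a ha hag => (Finset.mem_sdiff.mp (hS ha)).2 hag)
    · intro K hK
      simp only [Finset.mem_filter] at hK
      rw [Finset.card_sdiff_of_subset hK.2.2.1]
  rw [hsum, Finset.sum_powerset_neg_one_pow_card]
  by_cases h : G = H
  · have : T = ∅ := by
      subst h
      rw [hT, Finset.sdiff_eq_empty_iff_subset]
      exact Finset.inter_subset_left
    simp [this, h]
  · have : T ≠ ∅ := by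
      obtain ⟨v, hvH, hvG, hvN⟩ := crossing Γ hH hGH hG.1 h
      exact Finset.ne_empty_of_mem (Finset.mem_sdiff.mpr ⟨Finset.mem_inter.mpr ⟨hvH, hvN⟩, hvG⟩)
    simp [this, h]
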